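/- Rough Itô formula for one-dimensional rough paths (Theorem 4.1), in compensated-Riemann-sum form: Let T > 0, α ∈ (0,1], k := ⌊1/α⌋. Let X : [0,T] → ℝ satisfy |X_t − X_s| ≤ C_X·(t−s)^α and let G^2, …, G^k : [0,T] → ℝ satisfy |G^m_t − G^m_s| ≤ C_G·(t−s)^{kα} for all 0 ≤ s ≤ t ≤ T and m = 2, …, k. Define 𝕏^n_{s,t} := P_n^{(k)}(X_t − X_s, G^2_t − G^2_s, …, G^k_t − G^k_s) for n = 0, …, k. Let F : [0,T] × ℝ → ℝ be such that the partial derivatives ∂_t^a ∂_x^i F exist and are continuous on [0,T] × ℝ for all a ∈ {0,1} and 0 ≤ i ≤ k+1. Then for all 0 ≤ s ≤ t ≤ T: for every ε > 0 there is δ > 0 such that for every partition s = t_0 < ⋯ < t_N = t of [s,t] with mesh < δ, | ∑_{m=0}^{N−1} [ ∂_tF(t_m, X_{t_m})·(t_{m+1} − t_m) + ∑_{i=1}^{k} ∂_x^iF(t_m, X_{t_m})·𝕏^i_{t_m, t_{m+1}} − ∑_{i=2}^{k} ∂_x^iF(t_m, X_{t_m})·(G^i_{t_{m+1}} − G^i_{t_m})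 ] − ( F(t, X_t) − F(s, X_s) ) | < ε. (This expresses the identity F(t,X_t) − F(s,X_s) = ∫_s^t ∂_uF(u,X_u) du + ∫_s^t (∂_xF, …, ∂_x^kF)(u,X_u) d𝕏_u − ∑_{i=2}^{k} ∫_s^t ∂_x^iF(u,X_u) dG^i_u.) -/

import Mathlib

open Finset

set_option maxHeartbeats 1000000

lemma helper_small (C c γ : ℝ) (hc : 0 < c) (hγ : 0 < γ) :
    ∃ δ : ℝ, 0 < δ ∧ δ ≤ 1 ∧ ∀ x : ℝ, 0 ≤ x → x ≤ δ → C * x ^ γ ≤ c := by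
  refine ⟨min 1 ((c / (|C| + 1)) ^ (1/γ)), ?_, min_le_left _ _, ?_⟩
  · have h1 : (0:ℝ) < c / (|C| + 1) := by positivity
    have := Real.rpow_pos_of_pos h1 (1/γ)
    positivity
  · intro x hx hxδ
    have hbase : (0:ℝ) < c / (|C|+1) := by positivity
    have h1 : x ^ γ ≤ ((c / (|C|+1)) ^ (1/γ)) ^ γ :=
      Real.rpow_le_rpow hx (hxδ.trans (min_le_right _ _)) hγ.le
    have h2 : ((c / (|C|+1)) ^ (1/γ)) ^ γ = c / (|C|+1) := by
      rw [← Real.rpow_mul hbase.le, one_div, inv_mul_cancel₀ hγ.ne', Real.rpow_one]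
    have h3 : x ^ γ ≤ c/(|C|+1) := h2 ▸ h1
    have h4 : 0 ≤ x ^ γ := Real.rpow_nonneg hx γ
    have h5 : |C| * (x^γ) ≤ |C| * (c/(|C|+1)) := mul_le_mul_of_nonneg_left h3 (abs_nonneg C)
    have h6 : C * x^γ ≤ |C| * (x^γ) := mul_le_mul_of_nonneg_right (le_abs_self C) h4
    have h7 : |C| * (c / (|C|+1)) ≤ c := by
      rw [mul_div_assoc', div_le_iff₀ (by positivity)]
      nlinarith [abs_nonneg C]
    linarith

lemma taylor_bound (n : ℕ) (g : ℕ → ℝ → ℝ)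
    (hg : ∀ i ≤ n, ∀ x : ℝ, HasDerivAt (g i) (g (i+1) x) x)
    (a b M : ℝ) (hM : ∀ x ∈ Set.uIcc a b, |g (n+1) x| ≤ M) :
    |g 0 b - ∑ i ∈ Finset.range (n+1), g i a * (b-a)^i / (Nat.factorial i : ℝ)|
      ≤ M * |b-a|^(n+1) / (Nat.factorial n : ℝ) := by
  set φ : ℝ → ℝ := fun x => ∑ i ∈ Finset.range (n+1), g i x * (b-x)^i / (Nat.factorial i : ℝ)
    with hφdef
  have hφb : φ b = g 0 b := by
    rw [hφdef]; dsimp only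
    rw [Finset.sum_eq_single_of_mem 0 (Finset.mem_range.mpr (Nat.succ_pos n))]
    · simp
    · intro i _ hi
      simp [zero_pow hi]
  set f : ℕ → ℝ → ℝ := fun j x =>
    if j = 0 then 0 else g j x * (b-x)^(j-1) / (Nat.factorial (j-1) : ℝ) with hfdef
  have hφ' : ∀ x : ℝ, HasDerivAt φ (g (n+1) x * (b-x)^n / (Nat.factorial n : ℝ)) x := by
    intro x
    have hsum : HasDerivAt φ (∑ i ∈ Finset.range (n+1), (f (i+1) x - f i x)) x := by
      apply HasDerivAt.fun_sum
      intro i hi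
      have h1 : HasDerivAt (fun x => g i x) (g (i+1) x) x :=
        hg i (by simpa using Nat.lt_succ_iff.mp (Finset.mem_range.mp hi)) x
      have h2 : HasDerivAt (fun x : ℝ => (b-x)^i) ((i : ℝ) * (b-x)^(i-1) * (-1)) x :=
        ((hasDerivAt_id x).const_sub b).pow i
      have h3 := (h1.mul h2).div_const (Nat.factorial i : ℝ)
      convert h3 using 1
      · rfl
      · rfl
      rcases Nat.eq_zero_or_pos i with hi0 | hi0
      · subst hi0; simp [hfdef]
      · have hne : i ≠ 0 := by omega
        have hfac : (Nat.factorial i : ℝ) = i * Nat.factorial (i-1) := by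
          exact_mod_cast (Nat.mul_factorial_pred hi0.ne').symm
        have hfacpos : (0:ℝ) < Nat.factorial (i-1) := by positivity
        have hipos : (0:ℝ) < i := by exact_mod_cast hi0
        simp only [hfdef, if_neg hne, Nat.add_sub_cancel, if_neg (Nat.succ_ne_zero i)]
        field_simp [hfac]
        rw [hfac]; ring
    have htel : ∑ i ∈ Finset.range (n+1), (f (i+1) x - f i x)
        = g (n+1) x * (b-x)^n / (Nat.factorial n : ℝ) := by
      rw [Finset.sum_range_sub (fun j => f j x) (n+1)]
      simp [hfdef]
    rwa [htel] at hsum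
  have hM0 : 0 ≤ M := (abs_nonneg _).trans (hM a Set.left_mem_uIcc)
  have key : ∀ x ∈ Set.uIcc a b,
      |g (n+1) x * (b-x)^n / (Nat.factorial n : ℝ)| ≤ M * |b-a|^n / (Nat.factorial n : ℝ) := by
    intro x hx
    have hbx : |b - x| ≤ |b - a| := by
      rcases Set.mem_uIcc.mp hx with ⟨h1, h2⟩ | ⟨h1, h2⟩
      · rw [abs_of_nonneg (by linarith), abs_of_nonneg (by linarith)]; linarith
      · rw [abs_of_nonpos (by linarith), abs_of_nonpos (by linarith)]; linarith
    have : |g (n+1) x * (b-x)^n / (Nat.factorial n : ℝ)|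
        = |g (n+1) x| * |b-x|^n / (Nat.factorial n : ℝ) := by
      rw [abs_div, abs_mul, abs_pow, Nat.abs_cast]
    rw [this]
    gcongr
    exact hM x hx
  have conv : Convex ℝ (Set.uIcc a b) := convex_uIcc a b
  have := Convex.norm_image_sub_le_of_norm_hasDerivWithin_le
    (f := φ) (f' := fun x => g (n+1) x * (b-x)^n / (Nat.factorial n : ℝ))
    (C := M * |b-a|^n / (Nat.factorial n : ℝ))
    (fun x _ => (hφ' x).hasDerivWithinAt)
    (fun x hx => by rw [Real.norm_eq_abs]; exact key x hx)
    conv Set.left_mem_uIcc Set.right_mem_uIcc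
  rw [Real.norm_eq_abs, Real.norm_eq_abs, hφb] at this
  calc |g 0 b - φ a| ≤ M * |b-a|^n / (Nat.factorial n : ℝ) * |b - a| := this
    _ = M * |b-a|^(n+1) / (Nat.factorial n : ℝ) := by rw [pow_succ]; ring


/-- The `n`-th complete Bell polynomial of degree `k`. -/
noncomputable def bellP (k n : ℕ) (a : Fin k → ℝ) : ℝ :=
  ∑ p ∈ (Fintype.piFinset fun _ : Fin k => Finset.range (n + 1)).filter
      (fun p => ∑ m : Fin k, ((m : ℕ) + 1) * p m = n),
    ∏ m : Fin k, a m ^ p m / (Nat.factorial (p m) : ℝ)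

lemma bell_bound (k i : ℕ) (hk : 0 < k) (hi1 : 1 ≤ i) (hik : i ≤ k)
    (α D Cs : ℝ) (hα : 0 < α) (hD : 0 < D) (hD1 : D ≤ 1) (hCs : 1 ≤ Cs)
    (a : Fin k → ℝ)
    (ha0 : |a ⟨0, hk⟩| ≤ Cs * D ^ α)
    (ham : ∀ m : Fin k, (m : ℕ) ≠ 0 → |a m| ≤ Cs * D ^ ((k:ℝ) * α)) :
    |bellP k i a - a ⟨0, hk⟩ ^ i / (Nat.factorial i : ℝ)
        - (if 2 ≤ i then a ⟨i-1, by omega⟩ else 0)|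
      ≤ (((k+1)^k * Cs^k : ℝ)) * D ^ (α + (k:ℝ) * α) := by
  classical
  set z : Fin k := ⟨0, hk⟩ with hzdef
  set w : Fin k := ⟨i-1, by omega⟩ with hwdef
  set pX : Fin k → ℕ := fun m => if (m:ℕ) = 0 then i else 0 with hpXdef
  set pG : Fin k → ℕ := fun m => if (m:ℕ) = i - 1 then 1 else 0 with hpGdef
  set f : (Fin k → ℕ) → ℝ := fun p => ∏ m, a m ^ p m / (Nat.factorial (p m) : ℝ) with hfdef
  set S : Finset (Fin k → ℕ) :=
    (Fintype.piFinset fun _ : Fin k => Finset.range (i + 1)).filter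
      (fun p => ∑ m : Fin k, ((m : ℕ) + 1) * p m = i) with hSdef
  have hbell : bellP k i a = ∑ p ∈ S, f p := rfl
  -- values at special points
  have hfX : f pX = a z ^ i / (Nat.factorial i : ℝ) := by
    rw [hfdef]; dsimp only
    rw [Finset.prod_eq_single_of_mem z (Finset.mem_univ z)]
    · simp [hpXdef, hzdef]
    · intro m _ hm
      have : (m:ℕ) ≠ 0 := fun h => hm (Fin.ext h)
      simp [hpXdef, this]
  have hfG : 2 ≤ i → f pG = a w := by
    intro h2
    rw [hfdef]; dsimp only
    rw [Finset.prod_eq_single_of_mem w (Finset.mem_univ w)]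
    · simp [hpGdef, hwdef]
    · intro m _ hm
      have : (m:ℕ) ≠ i - 1 := by
        intro h; exact hm (Fin.ext (by rw [h, hwdef]))
      simp [hpGdef, this]
  -- memberships
  have hXS : pX ∈ S := by
    rw [hSdef, Finset.mem_filter]
    constructor
    · rw [Fintype.mem_piFinset]
      intro m
      rw [Finset.mem_range]
      by_cases hm : (m:ℕ) = 0 <;> simp [hpXdef, hm] <;> omega
    · rw [Finset.sum_eq_single_of_mem z (Finset.mem_univ z)]
      · simp [hpXdef, hzdef]
      · intro m _ hm
        have : (m:ℕ) ≠ 0 := fun h => hm (Fin.ext h)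
        simp [hpXdef, this]
  have hGS : 2 ≤ i → pG ∈ S := by
    intro h2
    rw [hSdef, Finset.mem_filter]
    constructor
    · rw [Fintype.mem_piFinset]
      intro m
      rw [Finset.mem_range]
      by_cases hm : (m:ℕ) = i - 1 <;> simp [hpGdef, hm] <;> omega
    · rw [Finset.sum_eq_single_of_mem w (Finset.mem_univ w)]
      · have : (w:ℕ) = i - 1 := rfl
        simp [hpGdef, this]
        omega
      · intro m _ hm
        have : (m:ℕ) ≠ i - 1 := by
          intro h; exact hm (Fin.ext (by rw [h, hwdef]))
        simp [hpGdef, this]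
  have hne : 2 ≤ i → pX ≠ pG := by
    intro h2 h
    have h0 : pX z = i := by rw [hpXdef]; simp [hzdef]
    have h1 : pG z = 0 := by
      rw [hpGdef]
      have hne' : (0:ℕ) ≠ i - 1 := by omega
      simp [hzdef, hne']
    rw [h, h1] at h0
    omega
  set T0 : Finset (Fin k → ℕ) := if 2 ≤ i then {pX, pG} else {pX} with hT0def
  have hT0S : T0 ⊆ S := by
    rw [hT0def]
    split_ifs with h2
    · intro p hp
      rcases Finset.mem_insert.mp hp with h | h
      · exact h ▸ hXS
      · exact (Finset.mem_singleton.mp h) ▸ hGS h2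
    · intro p hp
      exact (Finset.mem_singleton.mp hp) ▸ hXS
  have hsumT0 : ∑ p ∈ T0, f p
      = a z ^ i / (Nat.factorial i : ℝ) + (if 2 ≤ i then a w else 0) := by
    rw [hT0def]
    split_ifs with h2
    · rw [Finset.sum_pair (hne h2), hfX, hfG h2]
    · rw [Finset.sum_singleton, hfX]; ring
  have hsplit : ∑ p ∈ S \ T0, f p + ∑ p ∈ T0, f p = ∑ p ∈ S, f p := Finset.sum_sdiff hT0S
  -- per-term bound
  have hterm : ∀ p ∈ S \ T0, |f p| ≤ Cs ^ k * D ^ (α + (k:ℝ) * α) := by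
    intro p hp
    obtain ⟨hpS, hpT0⟩ := Finset.mem_sdiff.mp hp
    obtain ⟨hppi, hpw⟩ := Finset.mem_filter.mp hpS
    set q : ℕ := ∑ m ∈ Finset.univ.erase z, p m with hqdef
    -- case analysis: (1 ≤ p z ∧ 1 ≤ q) ∨ 2 ≤ q
    have hcases : (1 ≤ p z ∧ 1 ≤ q) ∨ 2 ≤ q := by
      by_contra hcon
      push_neg at hcon
      obtain ⟨h1, h2⟩ := hcon
      have hq0orq1 : q = 0 ∨ (q = 1 ∧ p z = 0) := by
        rcases Nat.eq_zero_or_pos (p z) with hpz | hpz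
        · rcases Nat.eq_zero_or_pos q with hq | hq
          · left; exact hq
          · right; exact ⟨by omega, hpz⟩
        · have := h1 hpz; omega
      rcases hq0orq1 with hq0 | ⟨hq1, hpz0⟩
      · -- q = 0 : p = pX
        have hz0 : ∀ m ∈ Finset.univ.erase z, p m = 0 :=
          Finset.sum_eq_zero_iff.mp (hqdef.symm.trans hq0)
        have hwgt : ∑ m : Fin k, ((m : ℕ) + 1) * p m = p z := by
          rw [Finset.sum_eq_single_of_mem z (Finset.mem_univ z)]
          · simp [hzdef]
          · intro m _ hm
            rw [hz0 m (Finset.mem_erase.mpr ⟨hm, Finset.mem_univ m⟩)]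
            ring
        have hpz : p z = i := by rw [← hwgt, hpw]
        apply hpT0
        have : p = pX := by
          funext m
          by_cases hm : m = z
          · rw [hm, hpz]; simp [hpXdef, hzdef]
          · have hm' : (m:ℕ) ≠ 0 := fun h => hm (Fin.ext h)
            rw [hz0 m (Finset.mem_erase.mpr ⟨hm, Finset.mem_univ m⟩)]
            simp [hpXdef, hm']
        rw [this, hT0def]
        split_ifs <;> simp
      · -- q = 1
        have hsum1 : ∑ m ∈ Finset.univ.erase z, p m = 1 := hqdef.symm.trans hq1
        -- find the unique m₀
        have hex : ∃ m₀ ∈ Finset.univ.erase z, p m₀ ≠ 0 := by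
          by_contra hcon2
          push_neg at hcon2
          have h0 : ∑ m ∈ Finset.univ.erase z, p m = 0 := Finset.sum_eq_zero hcon2
          omega
        obtain ⟨m₀, hm₀mem, hm₀ne⟩ := hex
        have hm₀le : p m₀ ≤ 1 := by
          calc p m₀ ≤ ∑ m ∈ Finset.univ.erase z, p m :=
                Finset.single_le_sum (fun _ _ => Nat.zero_le _) hm₀mem
            _ = 1 := hsum1
        have hm₀1 : p m₀ = 1 := by omega
        have hrest : ∀ m ∈ (Finset.univ.erase z).erase m₀, p m = 0 := by
          have hadd := Finset.add_sum_erase _ p hm₀mem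
          intro m hm
          have hsum0 : ∑ m ∈ (Finset.univ.erase z).erase m₀, p m = 0 := by omega
          exact Finset.sum_eq_zero_iff.mp hsum0 m hm
        have hm₀z : (m₀:ℕ) ≠ 0 := by
          intro h
          exact (Finset.mem_erase.mp hm₀mem).1 (Fin.ext h)
        have hwgt : ∑ m : Fin k, ((m : ℕ) + 1) * p m = (m₀:ℕ) + 1 := by
          rw [Finset.sum_eq_single_of_mem m₀ (Finset.mem_univ m₀)]
          · rw [hm₀1]; ring
          · intro m _ hm
            have hpm : p m = 0 := by
              by_cases hmz : m = z
              · rw [hmz]; exact hpz0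
              · exact hrest m (Finset.mem_erase.mpr ⟨hm,
                  Finset.mem_erase.mpr ⟨hmz, Finset.mem_univ m⟩⟩)
            rw [hpm]; ring
        have him : i = (m₀:ℕ) + 1 := by rw [← hpw, hwgt]
        have hi2 : 2 ≤ i := by omega
        apply hpT0
        have hpeq : p = pG := by
          funext m
          by_cases hm : m = m₀
          · rw [hm, hm₀1]
            have : (m₀:ℕ) = i - 1 := by omega
            simp [hpGdef, this]
          · have hmne : (m:ℕ) ≠ i - 1 := by
              intro h
              apply hm
              apply Fin.ext
              omega
            have hpm : p m = 0 := by
              by_cases hmz : m = z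
              · rw [hmz]; exact hpz0
              · exact hrest m (Finset.mem_erase.mpr ⟨hm,
                  Finset.mem_erase.mpr ⟨hmz, Finset.mem_univ m⟩⟩)
            simp [hpGdef, hpm, hmne]
        rw [hpeq, hT0def, if_pos hi2]
        simp
    -- now the numeric bound
    set β : Fin k → ℝ := fun m => if (m:ℕ) = 0 then α else (k:ℝ) * α with hβdef
    have habs : |f p| = ∏ m, |a m| ^ p m / (Nat.factorial (p m) : ℝ) := by
      rw [hfdef, Finset.abs_prod]
      congr 1
      funext m
      rw [abs_div, abs_pow, Nat.abs_cast]
    have hstep1 : |f p| ≤ ∏ m, (Cs * D ^ β m) ^ p m := by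
      rw [habs]
      apply Finset.prod_le_prod
      · intro m _; positivity
      · intro m _
        have h1 : |a m| ^ p m / (Nat.factorial (p m) : ℝ) ≤ |a m| ^ p m := by
          apply div_le_self (by positivity)
          exact_mod_cast Nat.one_le_iff_ne_zero.mpr (Nat.factorial_ne_zero (p m))
        refine h1.trans (pow_le_pow_left₀ (abs_nonneg _) ?_ _)
        by_cases hm : (m:ℕ) = 0
        · have hb : β m = α := by rw [hβdef]; simp [hm]
          rw [hb]
          have hmz : m = z := Fin.ext hm
          rw [hmz]; exact ha0
        · have hb : β m = (k:ℝ) * α := by rw [hβdef]; simp [hm]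
          rw [hb]; exact ham m hm
    have hstep2 : ∏ m, (Cs * D ^ β m) ^ p m
        = Cs ^ (∑ m, p m) * D ^ (∑ m, β m * p m) := by
      rw [← Finset.prod_pow_eq_pow_sum]
      rw [Real.rpow_sum_of_pos hD]
      rw [← Finset.prod_mul_distrib]
      congr 1
      funext m
      rw [mul_pow]
      congr 1
      rw [← Real.rpow_natCast (D ^ β m) (p m), ← Real.rpow_mul hD.le]
    have hsum_le : ∑ m, p m ≤ k := by
      calc ∑ m, p m ≤ ∑ m : Fin k, ((m : ℕ) + 1) * p m :=
            Finset.sum_le_sum (fun m _ => Nat.le_mul_of_pos_left _ (Nat.succ_pos _))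
        _ = i := hpw
        _ ≤ k := hik
    have hCs_le : Cs ^ (∑ m, p m) ≤ Cs ^ k := pow_le_pow_right₀ hCs hsum_le
    have hE : α + (k:ℝ) * α ≤ ∑ m, β m * p m := by
      have hsplitE : ∑ m, β m * (p m : ℝ)
          = α * p z + (k:ℝ) * α * q := by
        rw [← Finset.sum_erase_add _ _ (Finset.mem_univ z)]
        have h1 : β z * (p z : ℝ) = α * p z := by
          rw [hβdef]; simp [hzdef]
        have h2 : ∑ m ∈ Finset.univ.erase z, β m * (p m : ℝ)
            = (k:ℝ) * α * q := by
          rw [hqdef]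
          push_cast
          rw [Finset.mul_sum]
          apply Finset.sum_congr rfl
          intro m hm
          have hm' : (m:ℕ) ≠ 0 := fun h => (Finset.mem_erase.mp hm).1 (Fin.ext h)
          rw [hβdef]; simp [hm']
        rw [h1, h2]; ring
      rw [hsplitE]
      have hkα : 0 ≤ (k:ℝ) * α := by positivity
      have hk1 : (1:ℝ) ≤ (k:ℝ) := by exact_mod_cast hk
      rcases hcases with ⟨hpz1, hq1⟩ | hq2
      · have h1 : (1:ℝ) ≤ (p z : ℝ) := by exact_mod_cast hpz1
        have h2 : (1:ℝ) ≤ (q : ℝ) := by exact_mod_cast hq1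
        nlinarith
      · have h2 : (2:ℝ) ≤ (q : ℝ) := by exact_mod_cast hq2
        have h3 : (0:ℝ) ≤ (p z : ℝ) := by positivity
        nlinarith
    have hDle : D ^ (∑ m, β m * (p m:ℝ)) ≤ D ^ (α + (k:ℝ) * α) :=
      Real.rpow_le_rpow_of_exponent_ge hD hD1 hE
    calc |f p| ≤ Cs ^ (∑ m, p m) * D ^ (∑ m, β m * (p m:ℝ)) := hstep1.trans_eq hstep2
      _ ≤ Cs ^ k * D ^ (α + (k:ℝ) * α) := by
          apply mul_le_mul hCs_le hDle (Real.rpow_nonneg hD.le _) (by positivity)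
  -- cardinality
  have hcard : ((S \ T0).card : ℝ) ≤ ((k+1)^k : ℕ) := by
    have h1 : (S \ T0).card ≤ S.card := Finset.card_le_card (Finset.sdiff_subset)
    have h2 : S.card ≤ (Fintype.piFinset fun _ : Fin k => Finset.range (i + 1)).card := by
      rw [hSdef]; exact Finset.card_le_card (Finset.filter_subset _ _)
    have h3 : (Fintype.piFinset fun _ : Fin k => Finset.range (i + 1)).card = (i+1)^k := by
      rw [Fintype.card_piFinset]
      simp
    have h4 : (i+1)^k ≤ (k+1)^k := Nat.pow_le_pow_left (by omega) k
    exact_mod_cast le_trans h1 (le_trans h2 (h3 ▸ h4))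
  -- combine
  have hmain : |∑ p ∈ S \ T0, f p| ≤ ((k+1)^k : ℕ) * (Cs ^ k * D ^ (α + (k:ℝ) * α)) := by
    calc |∑ p ∈ S \ T0, f p| ≤ ∑ p ∈ S \ T0, |f p| := Finset.abs_sum_le_sum_abs _ _
      _ ≤ ∑ _p ∈ S \ T0, Cs ^ k * D ^ (α + (k:ℝ) * α) := Finset.sum_le_sum hterm
      _ = ((S \ T0).card : ℝ) * (Cs ^ k * D ^ (α + (k:ℝ) * α)) := by
          rw [Finset.sum_const, nsmul_eq_mul]
      _ ≤ ((k+1)^k : ℕ) * (Cs ^ k * D ^ (α + (k:ℝ) * α)) := by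
          apply mul_le_mul_of_nonneg_right hcard (by positivity)
  have hfinal : bellP k i a - a z ^ i / (Nat.factorial i : ℝ)
      - (if 2 ≤ i then a w else 0) = ∑ p ∈ S \ T0, f p := by
    rw [hbell, ← hsplit, hsumT0]; ring
  rw [hfinal]
  refine hmain.trans_eq ?_
  push_cast
  ring

/-- rough Itô formula for one-dimensional rough paths, in
compensated-Riemann-sum form.  Here `fd i t x` represents `∂_x^i F(t,x)` and
`ft i t x` represents `∂_t ∂_x^i F(t,x)`, for `0 ≤ i ≤ k+1`; these partial
derivatives are assumed to exist and be continuous on `[0,T] × ℝ`.  The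
compensated Riemann sums of
`∂_t F du + (∂_x F,…,∂_x^k F) d𝕏 − ∑_{i=2}^k ∂_x^i F dG^i`
converge to `F(t,X_t) − F(s,X_s)` as the mesh of the partition tends to `0`. -/
theorem rough_ito_formula
    (T α : ℝ) (hT : 0 < T) (hα : 0 < α) (hα1 : α ≤ 1)
    (k : ℕ) (hk : k = ⌊1 / α⌋₊)
    (X : ℝ → ℝ) (G : ℕ → ℝ → ℝ) (CX CG : ℝ)
    (hX : ∀ s t : ℝ, 0 ≤ s → s ≤ t → t ≤ T → |X t - X s| ≤ CX * (t - s) ^ α)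
    (hG : ∀ m, 2 ≤ m → m ≤ k → ∀ s t : ℝ, 0 ≤ s → s ≤ t → t ≤ T →
      |G m t - G m s| ≤ CG * (t - s) ^ ((k : ℝ) * α))
    (𝕏 : ℕ → ℝ → ℝ → ℝ)
    (h𝕏 : ∀ n, ∀ s t : ℝ, 𝕏 n s t = bellP k n (fun i : Fin k =>
      if (i : ℕ) = 0 then X t - X s else G ((i : ℕ) + 1) t - G ((i : ℕ) + 1) s))
    (F : ℝ → ℝ → ℝ) (fd ft : ℕ → ℝ → ℝ → ℝ)
    (hfd0 : fd 0 = F)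
    (hx : ∀ i, i < k + 1 → ∀ t ∈ Set.Icc (0 : ℝ) T, ∀ x : ℝ,
      HasDerivAt (fun y => fd i t y) (fd (i + 1) t x) x)
    (ht : ∀ i, i ≤ k + 1 → ∀ t ∈ Set.Icc (0 : ℝ) T, ∀ x : ℝ,
      HasDerivWithinAt (fun u => fd i u x) (ft i t x) (Set.Icc 0 T) t)
    (hcx : ∀ i, i ≤ k + 1 → ContinuousOn (fun p : ℝ × ℝ => fd i p.1 p.2)
      (Set.Icc (0 : ℝ) T ×ˢ Set.univ))
    (hct : ∀ i, i ≤ k + 1 → ContinuousOn (fun p : ℝ × ℝ => ft i p.1 p.2)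
      (Set.Icc (0 : ℝ) T ×ˢ Set.univ)) :
    ∀ s t : ℝ, 0 ≤ s → s ≤ t → t ≤ T → ∀ ε > (0 : ℝ), ∃ δ > (0 : ℝ),
      ∀ (N : ℕ) (π : ℕ → ℝ), π 0 = s → π N = t →
        (∀ m < N, π m < π (m + 1)) → (∀ m < N, π (m + 1) - π m < δ) →
        |(∑ m ∈ Finset.range N,
            (ft 0 (π m) (X (π m)) * (π (m + 1) - π m)
              + ∑ i ∈ Finset.Icc 1 k, fd i (π m) (X (π m)) * 𝕏 i (π m) (π (m + 1))
              - ∑ i ∈ Finset.Icc 2 k, fd i (π m) (X (π m)) * (G i (π (m + 1)) - G i (π m))))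
          - (F t (X t) - F s (X s))| < ε := by
  intro s t hs hst htT ε hε
  -- basic exponent facts
  have hk1 : 0 < k := by
    rw [hk]
    have h1 : (1:ℝ) ≤ 1 / α := by
      rw [le_div_iff₀ hα]; linarith
    exact_mod_cast Nat.le_floor (by exact_mod_cast h1)
  have hkα1 : 1 < ((k:ℝ) + 1) * α := by
    have h1 : 1 / α < (k:ℝ) + 1 := by
      rw [hk]; push_cast; exact Nat.lt_floor_add_one (1/α)
    calc (1:ℝ) = (1/α) * α := by field_simp
      _ < ((k:ℝ) + 1) * α := by apply mul_lt_mul_of_pos_right h1 hα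
  by_cases heq : s = t
  · -- degenerate case
    refine ⟨1, one_pos, ?_⟩
    intro N π hπ0 hπN hπlt _
    subst heq
    rcases Nat.eq_zero_or_pos N with hN | hN
    · subst hN
      simpa using hε
    · exfalso
      have hmono : ∀ b, b ≤ N → ∀ a, a ≤ b → π a ≤ π b := by
        intro b
        induction b with
        | zero => intro _ a ha; have : a = 0 := Nat.le_zero.mp ha; rw [this]
        | succ b ih =>
          intro hbN a ha
          by_cases hab : a = b + 1
          · rw [hab]
          · have ha' : a ≤ b := by omega
            exact (ih (by omega) a ha').trans (le_of_lt (hπlt b (by omega)))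
      have h2 : π 0 ≤ π (N-1) := hmono (N-1) (by omega) 0 (by omega)
      have h3 : π (N-1) < π N := by
        have h := hπlt (N-1) (by omega)
        have hN1 : N - 1 + 1 = N := by omega
        rwa [hN1] at h
      rw [hπ0, hπN] at *
      linarith
  have hslt : s < t := lt_of_le_of_ne hst heq
  -- positivity of CX
  have hCX0 : 0 ≤ CX := by
    have h := hX 0 T le_rfl hT.le le_rfl
    rw [sub_zero] at h
    have hTα : 0 < T ^ α := Real.rpow_pos_of_pos hT α
    nlinarith [abs_nonneg (X T - X 0)]
  -- bound on X
  set M : ℝ := |X 0| + CX * T ^ α with hMdef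
  have hXbound : ∀ u : ℝ, 0 ≤ u → u ≤ T → |X u| ≤ M := by
    intro u hu0 huT
    have h1 := hX 0 u le_rfl hu0 huT
    rw [sub_zero] at h1
    have h2 : u ^ α ≤ T ^ α := Real.rpow_le_rpow hu0 huT hα.le
    have h3 : |X u| - |X 0| ≤ |X u - X 0| := by
      have := abs_sub_abs_le_abs_sub (X u) (X 0)
      linarith
    have h4 : CX * u ^ α ≤ CX * T ^ α := mul_le_mul_of_nonneg_left h2 hCX0
    rw [hMdef]; linarith
  -- compact set
  set K : Set (ℝ × ℝ) := Set.Icc (0:ℝ) T ×ˢ Set.Icc (-M) M with hKdef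
  have hKcomp : IsCompact K := isCompact_Icc.prod isCompact_Icc
  have hKsub : K ⊆ Set.Icc (0:ℝ) T ×ˢ Set.univ :=
    Set.prod_mono subset_rfl (Set.subset_univ _)
  have hmemK : ∀ u : ℝ, 0 ≤ u → u ≤ T → (u, X u) ∈ K := by
    intro u hu0 huT
    exact ⟨⟨hu0, huT⟩, abs_le.mp (hXbound u hu0 huT)⟩
  -- bound M1 on fd (k+1)
  obtain ⟨M1, hM1⟩ := hKcomp.exists_bound_of_continuousOn ((hcx (k+1) le_rfl).mono hKsub)
  have hM1nonneg : 0 ≤ M1 :=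
    (norm_nonneg _).trans (hM1 (0, X 0) (hmemK 0 le_rfl hT.le))
  -- bound M2 on sum of |fd i|
  have hsumcont : ContinuousOn (fun p : ℝ × ℝ => ∑ i ∈ Finset.Icc 1 k, |fd i p.1 p.2|) K := by
    apply continuousOn_finset_sum
    intro i hi
    have hik : i ≤ k + 1 := by
      have := Finset.mem_Icc.mp hi; omega
    exact ((hcx i hik).mono hKsub).abs
  obtain ⟨M2, hM2'⟩ := hKcomp.exists_bound_of_continuousOn hsumcont
  have hM2 : ∀ p ∈ K, ∑ i ∈ Finset.Icc 1 k, |fd i p.1 p.2| ≤ M2 := by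
    intro p hp
    exact (le_abs_self _).trans (hM2' p hp)
  have hM2nonneg : 0 ≤ M2 := by
    have := hM2 (0, X 0) (hmemK 0 le_rfl hT.le)
    refine le_trans ?_ this
    exact Finset.sum_nonneg (fun i _ => abs_nonneg _)
  -- ε'
  set ε' : ℝ := ε / (2 * (t - s)) with hε'def
  have hε'pos : 0 < ε' := by
    rw [hε'def]; apply div_pos hε; linarith
  -- uniform continuity of ft 0 on K
  have hUC := hKcomp.uniformContinuousOn_of_continuous ((hct 0 (by omega)).mono hKsub)
  rw [Metric.uniformContinuousOn_iff] at hUC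
  obtain ⟨δA, hδApos, hδA⟩ := hUC (ε'/3) (by positivity)
  -- the constant Cs
  set Cs : ℝ := max 1 (max CX CG) with hCsdef
  have hCs1 : 1 ≤ Cs := le_max_left _ _
  have hCsX : CX ≤ Cs := (le_max_left _ _).trans (le_max_right _ _)
  have hCsG : CG ≤ Cs := (le_max_right _ _).trans (le_max_right _ _)
  -- helper deltas
  obtain ⟨δ1, hδ1pos, hδ1le1, hδ1⟩ := helper_small CX (δA/2) α (by positivity) hα
  have hγBpos : 0 < ((k:ℝ)+1) * α - 1 := by linarith
  obtain ⟨δ2, hδ2pos, _, hδ2⟩ := helper_small (M1 * CX^(k+1) / (Nat.factorial k : ℝ))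
    (ε'/3) (((k:ℝ)+1) * α - 1) (by positivity) hγBpos
  have hγCpos : 0 < α + (k:ℝ) * α - 1 := by nlinarith
  obtain ⟨δ3, hδ3pos, _, hδ3⟩ := helper_small (M2 * (((k:ℕ)+1)^k * Cs^k : ℝ))
    (ε'/3) (α + (k:ℝ) * α - 1) (by positivity) hγCpos
  set δ : ℝ := min (min δA δ1) (min δ2 δ3) with hδdef
  have hδpos : 0 < δ := by
    rw [hδdef]
    exact lt_min (lt_min hδApos hδ1pos) (lt_min hδ2pos hδ3pos)
  have hδleA : δ ≤ δA := le_trans (min_le_left _ _) (min_le_left _ _)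
  have hδle1 : δ ≤ δ1 := le_trans (min_le_left _ _) (min_le_right _ _)
  have hδle2 : δ ≤ δ2 := le_trans (min_le_right _ _) (min_le_left _ _)
  have hδle3 : δ ≤ δ3 := le_trans (min_le_right _ _) (min_le_right _ _)
  refine ⟨δ, hδpos, ?_⟩
  intro N π hπ0 hπN hπlt hπmesh
  -- monotonicity of the partition
  have hmono : ∀ b, b ≤ N → ∀ a, a ≤ b → π a ≤ π b := by
    intro b
    induction b with
    | zero => intro _ a ha; have : a = 0 := Nat.le_zero.mp ha; rw [this]
    | succ b ih =>
      intro hbN a ha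
      by_cases hab : a = b + 1
      · rw [hab]
      · have ha' : a ≤ b := by omega
        exact (ih (by omega) a ha').trans (le_of_lt (hπlt b (by omega)))
  -- key per-interval estimate
  have key : ∀ u v : ℝ, s ≤ u → u < v → v ≤ t → v - u < δ →
      |(ft 0 u (X u) * (v - u)
          + ∑ i ∈ Finset.Icc 1 k, fd i u (X u) * 𝕏 i u v
          - ∑ i ∈ Finset.Icc 2 k, fd i u (X u) * (G i v - G i u))
        - (F v (X v) - F u (X u))| ≤ ε' * (v - u) := by
    intro u v hsu huv hvt hmesh
    have h0u : 0 ≤ u := le_trans hs hsu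
    have hvT : v ≤ T := le_trans hvt htT
    have huT : u ≤ T := le_trans huv.le hvT
    have h0v : 0 ≤ v := le_trans h0u huv.le
    have hD : 0 < v - u := by linarith
    have hDδ : v - u ≤ δ := le_of_lt hmesh
    have hD1 : v - u ≤ 1 := le_trans hDδ (le_trans hδle1 hδ1le1)
    have huK : (u, X u) ∈ K := hmemK u h0u huT
    have hvK : (v, X v) ∈ K := hmemK v h0v hvT
    -- Part A : time increment
    have hFcont : ContinuousOn (fun τ => F τ (X v)) (Set.Icc u v) := by
      have h1 := hcx 0 (by omega)
      rw [hfd0] at h1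
      have h2 : ContinuousOn (fun τ : ℝ => ((τ, X v) : ℝ × ℝ)) (Set.Icc u v) :=
        (continuous_id.prodMk continuous_const).continuousOn
      exact h1.comp h2 (fun τ hτ => ⟨⟨le_trans h0u hτ.1, le_trans hτ.2 hvT⟩, Set.mem_univ _⟩)
    have hFder : ∀ τ ∈ Set.Ioo u v, HasDerivAt (fun τ => F τ (X v)) (ft 0 τ (X v)) τ := by
      intro τ hτ
      have h0τ : 0 < τ := lt_of_le_of_lt h0u hτ.1
      have hτT : τ < T := lt_of_lt_of_le hτ.2 hvT
      have h1 := ht 0 (by omega) τ ⟨h0τ.le, hτT.le⟩ (X v)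
      rw [hfd0] at h1
      exact h1.hasDerivAt (Icc_mem_nhds h0τ hτT)
    obtain ⟨ξ, hξmem, hslope⟩ := exists_hasDerivAt_eq_slope _ _ huv hFcont hFder
    have hvune : v - u ≠ 0 := ne_of_gt hD
    rw [eq_div_iff hvune] at hslope
    have hA : F v (X v) - F u (X v) = ft 0 ξ (X v) * (v - u) := hslope.symm
    have hξK : (ξ, X v) ∈ K :=
      ⟨⟨le_trans h0u hξmem.1.le, le_trans hξmem.2.le hvT⟩, (hmemK v h0v hvT).2⟩
    have hdist : dist ((ξ, X v) : ℝ × ℝ) ((u, X u) : ℝ × ℝ) < δA := by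
      rw [Prod.dist_eq]
      apply max_lt
      · rw [Real.dist_eq]
        have h1 : |ξ - u| = ξ - u := abs_of_nonneg (by linarith [hξmem.1])
        rw [h1]
        have := hξmem.2
        linarith [lt_of_lt_of_le hmesh hδleA]
      · rw [Real.dist_eq]
        have h1 := hX u v h0u huv.le hvT
        have h2 := hδ1 (v - u) hD.le (le_trans hDδ hδle1)
        calc |X v - X u| ≤ CX * (v-u) ^ α := h1
          _ ≤ δA / 2 := h2
          _ < δA := by linarith
    have hAbound : |ft 0 ξ (X v) - ft 0 u (X u)| ≤ ε'/3 := by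
      have := hδA (ξ, X v) hξK (u, X u) huK hdist
      rw [Real.dist_eq] at this
      exact this.le
    -- Part B : Taylor expansion in space
    have hgderiv : ∀ i ≤ k, ∀ x : ℝ, HasDerivAt (fun y => fd i u y) (fd (i+1) u x) x :=
      fun i hi x => hx i (by omega) u ⟨h0u, huT⟩ x
    have hMxv : ∀ x ∈ Set.uIcc (X u) (X v), |fd (k+1) u x| ≤ M1 := by
      intro x hxm
      have hXu := abs_le.mp (hXbound u h0u huT)
      have hXv := abs_le.mp (hXbound v h0v hvT)
      have hxM : x ∈ Set.Icc (-M) M := by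
        rcases Set.mem_uIcc.mp hxm with ⟨ha, hb⟩ | ⟨ha, hb⟩
        · exact ⟨by linarith [hXu.1], by linarith [hXv.2]⟩
        · exact ⟨by linarith [hXv.1], by linarith [hXu.2]⟩
      have := hM1 (u, x) ⟨⟨h0u, huT⟩, hxM⟩
      rwa [Real.norm_eq_abs] at this
    have hTay := taylor_bound k (fun i => fd i u) hgderiv (X u) (X v) M1 hMxv
    -- bound the Taylor remainder by ε'/3 * (v-u)
    have hXincr : |X v - X u| ≤ CX * (v - u) ^ α := hX u v h0u huv.le hvT
    have hpow1 : |X v - X u| ^ (k+1) ≤ (CX * (v-u)^α)^(k+1) :=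
      pow_le_pow_left₀ (abs_nonneg _) hXincr _
    have hpow2 : (CX * (v-u)^α)^(k+1) = CX^(k+1) * (v-u) ^ (α * ((k:ℝ)+1)) := by
      rw [mul_pow]
      congr 1
      rw [← Real.rpow_natCast ((v-u)^α) (k+1), ← Real.rpow_mul (by linarith : (0:ℝ) ≤ v-u)]
      congr 1
      push_cast; ring
    have hpow3 : (v-u) ^ (α * ((k:ℝ)+1)) = (v-u) ^ (((k:ℝ)+1)*α - 1) * (v-u) := by
      have h1 : α * ((k:ℝ)+1) = (((k:ℝ)+1)*α - 1) + 1 := by ring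
      rw [h1, Real.rpow_add hD, Real.rpow_one]
    have hBbound : M1 * |X v - X u| ^ (k+1) / (Nat.factorial k : ℝ) ≤ ε'/3 * (v-u) := by
      have hfacpos : (0:ℝ) < (Nat.factorial k : ℝ) := by positivity
      have h1 : M1 * |X v - X u| ^ (k+1) / (Nat.factorial k : ℝ)
          ≤ M1 * (CX^(k+1) * (v-u) ^ (α * ((k:ℝ)+1))) / (Nat.factorial k : ℝ) := by
        rw [← hpow2]
        gcongr
      have h2 : M1 * (CX^(k+1) * (v-u) ^ (α * ((k:ℝ)+1))) / (Nat.factorial k : ℝ)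
          = (M1 * CX^(k+1) / (Nat.factorial k : ℝ) * (v-u) ^ (((k:ℝ)+1)*α - 1)) * (v-u) := by
        rw [hpow3]; ring
      have h3 := hδ2 (v-u) hD.le (le_trans hDδ hδle2)
      have h4 : (M1 * CX^(k+1) / (Nat.factorial k : ℝ) * (v-u) ^ (((k:ℝ)+1)*α - 1)) * (v-u)
          ≤ ε'/3 * (v-u) := mul_le_mul_of_nonneg_right h3 hD.le
      linarith
    -- Part C : Bell polynomial remainders
    have hbellR : ∀ i ∈ Finset.Icc 1 k,
        |𝕏 i u v - (X v - X u)^i / (Nat.factorial i : ℝ)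
          - (if 2 ≤ i then G i v - G i u else 0)|
        ≤ (((k:ℕ)+1)^k * Cs^k : ℝ) * (v-u) ^ (α + (k:ℝ)*α) := by
      intro i hi
      obtain ⟨hi1, hik⟩ := Finset.mem_Icc.mp hi
      set a : Fin k → ℝ := fun m : Fin k =>
        if (m : ℕ) = 0 then X v - X u else G ((m : ℕ) + 1) v - G ((m : ℕ) + 1) u with hadef
      have ha0 : |a ⟨0, hk1⟩| ≤ Cs * (v-u) ^ α := by
        have h1 : a ⟨0, hk1⟩ = X v - X u := by rw [hadef]; simp
        rw [h1]
        calc |X v - X u| ≤ CX * (v-u)^α := hXincr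
          _ ≤ Cs * (v-u)^α := by
              apply mul_le_mul_of_nonneg_right hCsX (Real.rpow_nonneg hD.le α)
      have ham : ∀ m : Fin k, (m : ℕ) ≠ 0 → |a m| ≤ Cs * (v-u) ^ ((k:ℝ) * α) := by
        intro m hm
        have h1 : a m = G ((m : ℕ) + 1) v - G ((m : ℕ) + 1) u := by
          rw [hadef]; simp [hm]
        rw [h1]
        have h2 := hG ((m : ℕ) + 1) (by omega) (by omega) u v h0u huv.le hvT
        calc |G ((m:ℕ)+1) v - G ((m:ℕ)+1) u| ≤ CG * (v-u) ^ ((k:ℝ)*α) := h2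
          _ ≤ Cs * (v-u) ^ ((k:ℝ)*α) := by
              apply mul_le_mul_of_nonneg_right hCsG (Real.rpow_nonneg hD.le _)
      have hbb := bell_bound k i hk1 hi1 hik α (v-u) Cs hα hD hD1 hCs1 a ha0 ham
      have h1 : bellP k i a = 𝕏 i u v := (h𝕏 i u v).symm
      have h2 : a ⟨0, hk1⟩ = X v - X u := by rw [hadef]; simp
      have h3 : (if 2 ≤ i then a ⟨i-1, by omega⟩ else 0)
          = (if 2 ≤ i then G i v - G i u else 0) := by
        split_ifs with h2i
        · have hieq : i - 1 + 1 = i := by omega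
          have hstep : a ⟨i-1, by omega⟩ = G (i-1+1) v - G (i-1+1) u := by
            rw [hadef]
            have hne0 : ¬ (i - 1 = 0) := by omega
            simp [hne0]
          rw [hstep, hieq]
        · rfl
      rw [h1, h2, h3] at hbb
      exact hbb
    -- assemble
    set ΔX : ℝ := X v - X u with hΔXdef
    set TS : ℝ := ∑ i ∈ Finset.range (k+1), fd i u (X u) * ΔX^i / (Nat.factorial i : ℝ)
      with hTSdef
    have hTSsplit : TS = F u (X u)
        + ∑ i ∈ Finset.Icc 1 k, fd i u (X u) * ΔX^i / (Nat.factorial i : ℝ) := by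
      rw [hTSdef]
      have hins : Finset.range (k+1) = insert 0 (Finset.Icc 1 k) := by
        ext x; simp [Finset.mem_range, Finset.mem_Icc]; omega
      rw [hins, Finset.sum_insert (by simp)]
      simp [hfd0]
    have hcomp : ∑ i ∈ Finset.Icc 1 k, fd i u (X u) * (if 2 ≤ i then G i v - G i u else 0)
        = ∑ i ∈ Finset.Icc 2 k, fd i u (X u) * (G i v - G i u) := by
      have h1 : ∀ i ∈ Finset.Icc 1 k, fd i u (X u) * (if 2 ≤ i then G i v - G i u else 0)
          = if 2 ≤ i then fd i u (X u) * (G i v - G i u) else 0 := by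
        intro i _; split_ifs <;> ring
      rw [Finset.sum_congr rfl h1, ← Finset.sum_filter]
      congr 1
      ext x; simp [Finset.mem_Icc, Finset.mem_filter]; omega
    -- the three pieces
    set A' : ℝ := F v (X v) - F u (X v) - ft 0 u (X u) * (v - u) with hA'def
    set B' : ℝ := F u (X v) - TS with hB'def
    set C' : ℝ := ∑ i ∈ Finset.Icc 1 k, fd i u (X u)
        * (ΔX^i / (Nat.factorial i : ℝ) - 𝕏 i u v + (if 2 ≤ i then G i v - G i u else 0))
      with hC'def
    have hC'exp : C' = (TS - F u (X u))
        - ∑ i ∈ Finset.Icc 1 k, fd i u (X u) * 𝕏 i u v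
        + ∑ i ∈ Finset.Icc 2 k, fd i u (X u) * (G i v - G i u) := by
      rw [hC'def]
      have hdist2 : ∀ i ∈ Finset.Icc 1 k, fd i u (X u)
          * (ΔX^i / (Nat.factorial i : ℝ) - 𝕏 i u v + (if 2 ≤ i then G i v - G i u else 0))
          = fd i u (X u) * ΔX^i / (Nat.factorial i : ℝ) - fd i u (X u) * 𝕏 i u v
            + fd i u (X u) * (if 2 ≤ i then G i v - G i u else 0) := by
        intro i _; ring
      rw [Finset.sum_congr rfl hdist2, Finset.sum_add_distrib, Finset.sum_sub_distrib, hcomp]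
      rw [hTSsplit]
      ring
    have hiden : (ft 0 u (X u) * (v - u)
          + ∑ i ∈ Finset.Icc 1 k, fd i u (X u) * 𝕏 i u v
          - ∑ i ∈ Finset.Icc 2 k, fd i u (X u) * (G i v - G i u))
        - (F v (X v) - F u (X u)) = -A' - B' - C' := by
      rw [hA'def, hB'def, hC'exp, hTSsplit]
      ring
    rw [hiden]
    have habs3 : |-A' - B' - C'| ≤ |A'| + |B'| + |C'| := by
      calc |-A' - B' - C'| ≤ |-A' - B'| + |C'| := abs_sub _ _
        _ ≤ |A'| + |B'| + |C'| := by
            have : |-A' - B'| ≤ |A'| + |B'| := by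
              calc |-A' - B'| ≤ |-A'| + |B'| := abs_sub _ _
                _ = |A'| + |B'| := by rw [abs_neg]
            linarith
    have hAfin : |A'| ≤ ε'/3 * (v-u) := by
      rw [hA'def, hA]
      have : ft 0 ξ (X v) * (v - u) - ft 0 u (X u) * (v - u)
          = (ft 0 ξ (X v) - ft 0 u (X u)) * (v - u) := by ring
      rw [this, abs_mul, abs_of_pos hD]
      exact mul_le_mul_of_nonneg_right hAbound hD.le
    have hBfin : |B'| ≤ ε'/3 * (v-u) := by
      rw [hB'def, hTSdef]
      have h0 : F u (X v) = fd 0 u (X v) := by rw [hfd0]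
      calc |F u (X v) - ∑ i ∈ Finset.range (k+1), fd i u (X u) * ΔX^i / (Nat.factorial i : ℝ)|
          = |fd 0 u (X v) - ∑ i ∈ Finset.range (k+1),
              fd i u (X u) * (X v - X u)^i / (Nat.factorial i : ℝ)| := by rw [h0, hΔXdef]
        _ ≤ M1 * |X v - X u| ^ (k+1) / (Nat.factorial k : ℝ) := hTay
        _ ≤ ε'/3 * (v-u) := hBbound
    have hCfin : |C'| ≤ ε'/3 * (v-u) := by
      rw [hC'def]
      have hterm : ∀ i ∈ Finset.Icc 1 k,
          |fd i u (X u) * (ΔX^i / (Nat.factorial i : ℝ) - 𝕏 i u v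
            + (if 2 ≤ i then G i v - G i u else 0))|
          ≤ |fd i u (X u)| * ((((k:ℕ)+1)^k * Cs^k : ℝ) * (v-u) ^ (α + (k:ℝ)*α)) := by
        intro i hi
        rw [abs_mul]
        apply mul_le_mul_of_nonneg_left _ (abs_nonneg _)
        have h1 := hbellR i hi
        have h2 : |ΔX^i / (Nat.factorial i : ℝ) - 𝕏 i u v
            + (if 2 ≤ i then G i v - G i u else 0)|
            = |𝕏 i u v - ΔX^i / (Nat.factorial i : ℝ)
              - (if 2 ≤ i then G i v - G i u else 0)| := by
          rw [← abs_neg]; congr 1; ring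
        rw [h2, hΔXdef]
        exact h1
      calc |∑ i ∈ Finset.Icc 1 k, fd i u (X u)
            * (ΔX^i / (Nat.factorial i : ℝ) - 𝕏 i u v
              + (if 2 ≤ i then G i v - G i u else 0))|
          ≤ ∑ i ∈ Finset.Icc 1 k, |fd i u (X u)
            * (ΔX^i / (Nat.factorial i : ℝ) - 𝕏 i u v
              + (if 2 ≤ i then G i v - G i u else 0))| := Finset.abs_sum_le_sum_abs _ _
        _ ≤ ∑ i ∈ Finset.Icc 1 k, |fd i u (X u)|
            * ((((k:ℕ)+1)^k * Cs^k : ℝ) * (v-u) ^ (α + (k:ℝ)*α)) :=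
            Finset.sum_le_sum hterm
        _ = (∑ i ∈ Finset.Icc 1 k, |fd i u (X u)|)
            * ((((k:ℕ)+1)^k * Cs^k : ℝ) * (v-u) ^ (α + (k:ℝ)*α)) := by
            rw [← Finset.sum_mul]
        _ ≤ M2 * ((((k:ℕ)+1)^k * Cs^k : ℝ) * (v-u) ^ (α + (k:ℝ)*α)) := by
            apply mul_le_mul_of_nonneg_right (hM2 (u, X u) huK)
            positivity
        _ = (M2 * (((k:ℕ)+1)^k * Cs^k : ℝ) * (v-u) ^ (α + (k:ℝ)*α - 1)) * (v-u) := by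
            have h1 : α + (k:ℝ)*α = (α + (k:ℝ)*α - 1) + 1 := by ring
            rw [h1, Real.rpow_add hD, Real.rpow_one]
            ring
        _ ≤ ε'/3 * (v-u) := by
            apply mul_le_mul_of_nonneg_right _ hD.le
            exact hδ3 (v-u) hD.le (le_trans hDδ hδle3)
    calc |-A' - B' - C'| ≤ |A'| + |B'| + |C'| := habs3
      _ ≤ ε'/3 * (v-u) + ε'/3 * (v-u) + ε'/3 * (v-u) := by linarith
      _ = ε' * (v - u) := by ring
  -- sum up
  have htele : ∑ m ∈ Finset.range N, (F (π (m+1)) (X (π (m+1))) - F (π m) (X (π m)))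
      = F t (X t) - F s (X s) := by
    rw [Finset.sum_range_sub (fun m => F (π m) (X (π m))) N, hπ0, hπN]
  have htele2 : ∑ m ∈ Finset.range N, (π (m+1) - π m) = t - s := by
    rw [Finset.sum_range_sub π N, hπ0, hπN]
  calc |(∑ m ∈ Finset.range N,
        (ft 0 (π m) (X (π m)) * (π (m + 1) - π m)
          + ∑ i ∈ Finset.Icc 1 k, fd i (π m) (X (π m)) * 𝕏 i (π m) (π (m + 1))
          - ∑ i ∈ Finset.Icc 2 k, fd i (π m) (X (π m)) * (G i (π (m + 1)) - G i (π m))))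
      - (F t (X t) - F s (X s))|
      = |∑ m ∈ Finset.range N,
          ((ft 0 (π m) (X (π m)) * (π (m + 1) - π m)
            + ∑ i ∈ Finset.Icc 1 k, fd i (π m) (X (π m)) * 𝕏 i (π m) (π (m + 1))
            - ∑ i ∈ Finset.Icc 2 k, fd i (π m) (X (π m)) * (G i (π (m + 1)) - G i (π m)))
          - (F (π (m+1)) (X (π (m+1))) - F (π m) (X (π m))))| := by
        rw [← htele, ← Finset.sum_sub_distrib]
    _ ≤ ∑ m ∈ Finset.range N,
          |(ft 0 (π m) (X (π m)) * (π (m + 1) - π m)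
            + ∑ i ∈ Finset.Icc 1 k, fd i (π m) (X (π m)) * 𝕏 i (π m) (π (m + 1))
            - ∑ i ∈ Finset.Icc 2 k, fd i (π m) (X (π m)) * (G i (π (m + 1)) - G i (π m)))
          - (F (π (m+1)) (X (π (m+1))) - F (π m) (X (π m)))| := Finset.abs_sum_le_sum_abs _ _
    _ ≤ ∑ m ∈ Finset.range N, ε' * (π (m+1) - π m) := by
        apply Finset.sum_le_sum
        intro m hm
        have hmN : m < N := Finset.mem_range.mp hm
        have hsu : s ≤ π m := by
          rw [← hπ0]; exact hmono m (by omega) 0 (by omega)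
        have hvt : π (m+1) ≤ t := by
          rw [← hπN]; exact hmono N (le_refl N) (m+1) (by omega)
        exact key (π m) (π (m+1)) hsu (hπlt m hmN) hvt (hπmesh m hmN)
    _ = ε' * (t - s) := by rw [← Finset.mul_sum, htele2]
    _ < ε := by
        rw [hε'def]
        rw [div_mul_eq_mul_div, mul_comm]
        rw [div_lt_iff₀ (by linarith : (0:ℝ) < 2 * (t - s))]
        nlinarith
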